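/- Let M be a finite nonempty set, θ a completely alternating function on subsets of M with θ(∅)=0 and θ({t})=1, and τ^M_L := Σ_{I⊆L}(−1)^{|I|+1} θ((M∖L)∪I) ≥ 0 the TM coefficients. Let ℓ*(x) := Σ_{∅≠L⊆M} τ^M_L ⋁_{t∈L} x_t for x ∈ [0,∞)^M. Then for every x ∈ [0,∞)^M and every y ∈ [0,∞)^M satisfying ⟨y, 𝟙_A⟩ ≤ θ(A) for all nonempty A ⊆ M, one has ⟨x,y⟩ ≤ ℓ*(x). Consequently the dependency set of the TM vector equals {y ∈ [0,∞)^M : Σ_{t∈A} y_t ≤ θ(A) for all ∅ ≠ A ⊆ M}. -/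

import Mathlib

open Finset

/-- `ψ` is completely alternating on `(Finset M, ∪, ∅)`. -/
def CompAlt {M : Type*} [DecidableEq M] (ψ : Finset M → ℝ) : Prop :=
  ∀ n : ℕ, 1 ≤ n → ∀ (K : Finset M) (Ks : Fin n → Finset M),
    ∑ I ∈ (Finset.univ : Finset (Fin n)).powerset,
      (-1 : ℝ) ^ I.card * ψ (K ∪ I.sup Ks) ≤ 0

set_option linter.unusedSectionVars false
set_option linter.unusedVariables false

section Aux
variable {M : Type*} [Fintype M] [DecidableEq M]

/-- Max over a finset, 0 if empty. -/
noncomputable def msup (L : Finset M) (x : M → ℝ) : ℝ :=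
  if h : L.Nonempty then L.sup' h x else 0

lemma biSup_eq_msup [Nonempty M] (L : Finset M) (x : M → ℝ) (hx : ∀ t, 0 ≤ x t) :
    ⨆ t ∈ L, x t = msup L x := by
  rcases L.eq_empty_or_nonempty with rfl | hL
  · simp [msup, Real.iSup_of_isEmpty]
  · rw [msup, dif_pos hL]
    apply le_antisymm
    · refine ciSup_le fun t => ?_
      by_cases h : t ∈ L
      · rw [ciSup_pos h]
        exact le_sup' x h
      · haveI : IsEmpty (t ∈ L) := ⟨h⟩
        rw [Real.iSup_of_isEmpty]
        obtain ⟨s, hs⟩ := hL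
        exact le_trans (hx s) (le_sup' x hs)
    · refine Finset.sup'_le _ _ fun t ht => ?_
      have h1 : x t ≤ ⨆ _ : t ∈ L, x t := by rw [ciSup_pos ht]
      exact le_trans h1 (le_ciSup (f := fun t => ⨆ _ : t ∈ L, x t)
        (Finite.bddAbove_range _) t)


lemma msup_const_zero (L : Finset M) : msup L (fun _ => (0:ℝ)) = 0 := by
  rcases L.eq_empty_or_nonempty with rfl | hL
  · simp [msup]
  · rw [msup, dif_pos hL, Finset.sup'_const]

lemma msup_congr {L : Finset M} {x x' : M → ℝ} (h : ∀ t ∈ L, x t = x' t) :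
    msup L x = msup L x' := by
  rcases L.eq_empty_or_nonempty with rfl | hL
  · simp [msup]
  · rw [msup, msup, dif_pos hL, dif_pos hL]
    exact Finset.sup'_congr hL rfl h

lemma msup_shift {S L : Finset M} (hLS : (L ∩ S).Nonempty) {x x' : M → ℝ} {c : ℝ}
    (hx' : ∀ t, 0 ≤ x' t) (hx'S : ∀ t, t ∉ S → x' t = 0)
    (hxdef : ∀ t, x t = x' t + if t ∈ S then c else 0) (hc : 0 ≤ c) :
    msup L x = msup L x' + c := by
  have hL : L.Nonempty := hLS.mono inter_subset_left
  have hx0 : ∀ t, 0 ≤ x t := by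
    intro t
    rw [hxdef t]
    have : (0:ℝ) ≤ if t ∈ S then c else 0 := by split <;> simp [hc]
    linarith [hx' t]
  have claim : ∀ (z : M → ℝ), (∀ t, 0 ≤ z t) → (∀ t, t ∉ S → z t = 0) →
      L.sup' hL z = (L ∩ S).sup' hLS z := by
    intro z hz hzS
    apply le_antisymm
    · refine Finset.sup'_le _ _ fun t ht => ?_
      by_cases hts : t ∈ S
      · exact le_sup' z (mem_inter.mpr ⟨ht, hts⟩)
      · rw [hzS t hts]
        obtain ⟨s, hs⟩ := hLS
        exact le_trans (hz s) (le_sup' z hs)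
    · exact Finset.sup'_mono z inter_subset_left hLS
  have hx'0off : ∀ t, t ∉ S → x t = 0 := by
    intro t ht; rw [hxdef t, if_neg ht, hx'S t ht, add_zero]
  rw [msup, msup, dif_pos hL, dif_pos hL, claim x hx0 hx'0off, claim x' hx' hx'S]
  have h1 : (L ∩ S).sup' hLS x = (L ∩ S).sup' hLS (fun t => x' t + c) :=
    Finset.sup'_congr hLS rfl fun t ht => by rw [hxdef t, if_pos (mem_inter.mp ht).2]
  rw [h1]
  have h2 := Finset.comp_sup'_eq_sup'_comp (γ := ℝ) (f := x') hLS (fun r => r + c)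
    (fun a b => by exact (max_add_add_right a b c).symm)
  simpa using h2.symm

lemma msup_indicator (A L : Finset M) :
    msup L (fun t => if t ∈ A then (1:ℝ) else 0) = if (L ∩ A).Nonempty then 1 else 0 := by
  rcases L.eq_empty_or_nonempty with rfl | hL
  · simp [msup]
  · rw [msup, dif_pos hL]
    by_cases h : (L ∩ A).Nonempty
    · rw [if_pos h]
      obtain ⟨a, ha⟩ := h
      apply le_antisymm
      · refine Finset.sup'_le _ _ fun t _ => ?_
        split <;> norm_num
      · have := le_sup' (fun t => if t ∈ A then (1:ℝ) else 0) (mem_inter.mp ha).1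
        refine le_trans (le_of_eq ?_) this
        simp [if_pos (mem_inter.mp ha).2]
    · rw [if_neg h]
      have : ∀ t ∈ L, (if t ∈ A then (1:ℝ) else 0) = 0 := by
        intro t ht
        rw [if_neg]
        intro hA
        exact h ⟨t, mem_inter.mpr ⟨ht, hA⟩⟩
      rw [Finset.sup'_congr hL rfl this, Finset.sup'_const]

lemma tau_rewrite (θ τ : Finset M → ℝ)
    (hτ : ∀ L : Finset M, τ L =
      ∑ I ∈ L.powerset, (-1 : ℝ) ^ (I.card + 1) * θ ((Finset.univ \ L) ∪ I))
    (L : Finset M) :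
    τ L = ∑ J ∈ L.powerset, (-1:ℝ) ^ ((L \ J).card + 1) * θ (univ \ J) := by
  rw [hτ]
  refine Finset.sum_nbij' (i := fun I => L \ I) (j := fun J => L \ J)
    (fun I hI => mem_powerset.mpr sdiff_subset)
    (fun J hJ => mem_powerset.mpr sdiff_subset) ?_ ?_ ?_
  · intro I hI
    exact Finset.sdiff_sdiff_eq_self (mem_powerset.mp hI)
  · intro J hJ
    exact Finset.sdiff_sdiff_eq_self (mem_powerset.mp hJ)
  · intro I hI
    have hI' : I ⊆ L := mem_powerset.mp hI
    have h1 : L \ (L \ I) = I := Finset.sdiff_sdiff_eq_self hI'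
    have h2 : univ \ (L \ I) = (univ \ L) ∪ I := by
      ext t
      simp only [mem_sdiff, mem_union, mem_univ, true_and]
      constructor
      · intro h
        by_cases ht : t ∈ L
        · right; by_contra hti; exact h ⟨ht, hti⟩
        · left; exact ht
      · rintro (h | h) ⟨htL, hti⟩
        · exact h htL
        · exact hti h
    rw [h1, h2]

lemma sum_tau_powerset (θ τ : Finset M → ℝ)
    (hτ : ∀ L : Finset M, τ L =
      ∑ I ∈ L.powerset, (-1 : ℝ) ^ (I.card + 1) * θ ((Finset.univ \ L) ∪ I))
    (C : Finset M) :
    ∑ L ∈ C.powerset, τ L = -θ (univ \ C) := by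
  calc ∑ L ∈ C.powerset, τ L
      = ∑ L ∈ C.powerset, ∑ J ∈ L.powerset, (-1:ℝ) ^ ((L \ J).card + 1) * θ (univ \ J) :=
        Finset.sum_congr rfl fun L _ => tau_rewrite θ τ hτ L
    _ = ∑ J ∈ C.powerset, ∑ L ∈ C.powerset.filter (fun L => J ⊆ L),
          (-1:ℝ) ^ ((L \ J).card + 1) * θ (univ \ J) := by
        refine Finset.sum_comm' fun L J => ?_
        simp only [mem_powerset, mem_filter]
        constructor
        · rintro ⟨h1, h2⟩; exact ⟨⟨h1, h2⟩, h2.trans h1⟩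
        · rintro ⟨⟨h1, h2⟩, _⟩; exact ⟨h1, h2⟩
    _ = ∑ J ∈ C.powerset, ∑ K ∈ (C \ J).powerset, (-1:ℝ) ^ (K.card + 1) * θ (univ \ J) := by
        refine Finset.sum_congr rfl fun J hJ => ?_
        have hJC : J ⊆ C := mem_powerset.mp hJ
        refine Finset.sum_nbij' (i := fun L => L \ J) (j := fun K => J ∪ K) ?_ ?_ ?_ ?_ ?_
        · intro L hL
          rw [mem_filter] at hL
          exact mem_powerset.mpr (sdiff_subset_sdiff (mem_powerset.mp hL.1) le_rfl)
        · intro K hK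
          have hK' : K ⊆ C \ J := mem_powerset.mp hK
          refine mem_filter.mpr ⟨mem_powerset.mpr (union_subset hJC (hK'.trans sdiff_subset)),
            subset_union_left⟩
        · intro L hL
          exact union_sdiff_of_subset (mem_filter.mp hL).2
        · intro K hK
          have hK' : K ⊆ C \ J := mem_powerset.mp hK
          have : Disjoint J K :=
            Finset.disjoint_left.mpr fun a haJ haK => (mem_sdiff.mp (hK' haK)).2 haJ
          exact union_sdiff_cancel_left this
        · intro L hL; rfl
    _ = ∑ J ∈ C.powerset, (if C \ J = ∅ then (1:ℝ) else 0) * (-θ (univ \ J)) := by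
        refine Finset.sum_congr rfl fun J _ => ?_
        have hz : ∑ K ∈ (C \ J).powerset, (-1:ℝ) ^ K.card
            = if C \ J = ∅ then (1:ℝ) else 0 := by
          have h := Finset.sum_powerset_neg_one_pow_card (x := C \ J)
          have h2 : ((∑ K ∈ (C \ J).powerset, (-1:ℤ) ^ K.card : ℤ) : ℝ)
              = if C \ J = ∅ then (1:ℝ) else 0 := by
            rw [h]; split_ifs <;> simp
          push_cast at h2
          exact h2
        calc ∑ K ∈ (C \ J).powerset, (-1:ℝ) ^ (K.card + 1) * θ (univ \ J)
            = (∑ K ∈ (C \ J).powerset, (-1:ℝ) ^ K.card) * (-θ (univ \ J)) := by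
              rw [Finset.sum_mul]
              exact Finset.sum_congr rfl fun K _ => by ring
          _ = (if C \ J = ∅ then (1:ℝ) else 0) * (-θ (univ \ J)) := by rw [hz]
    _ = ∑ J ∈ C.powerset, (if J = C then -θ (univ \ J) else 0) := by
        refine Finset.sum_congr rfl fun J hJ => ?_
        have hJC : J ⊆ C := mem_powerset.mp hJ
        by_cases h : J = C
        · rw [if_pos h, if_pos (by simp [h]), one_mul]
        · rw [if_neg h, if_neg, zero_mul]
          intro hCJ
          exact h (subset_antisymm hJC (sdiff_eq_empty_iff_subset.mp hCJ))
    _ = -θ (univ \ C) := by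
        rw [Finset.sum_ite_eq' C.powerset C (fun J => -θ (univ \ J)),
          if_pos (mem_powerset_self C)]

lemma sum_tau_inter (θ τ : Finset M → ℝ)
    (hτ : ∀ L : Finset M, τ L =
      ∑ I ∈ L.powerset, (-1 : ℝ) ^ (I.card + 1) * θ ((Finset.univ \ L) ∪ I))
    (h0 : θ ∅ = 0) (A : Finset M) :
    ∑ L ∈ (univ : Finset M).powerset.filter (fun L => (L ∩ A).Nonempty), τ L = θ A := by
  have hall : ∑ L ∈ (univ : Finset M).powerset, τ L = 0 := by
    rw [sum_tau_powerset θ τ hτ]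
    simp [h0]
  have hsub : ∑ L ∈ ((univ : Finset M) \ A).powerset, τ L = -θ A := by
    rw [sum_tau_powerset θ τ hτ]
    congr 1
    rw [sdiff_sdiff_self_left, univ_inter]
  have hsplit := Finset.sum_filter_add_sum_filter_not (univ : Finset M).powerset
    (fun L => (L ∩ A).Nonempty) τ
  have hneg : (univ : Finset M).powerset.filter (fun L => ¬(L ∩ A).Nonempty)
      = ((univ : Finset M) \ A).powerset := by
    ext L
    simp only [mem_filter, mem_powerset, subset_sdiff, not_nonempty_iff_eq_empty,
      ← disjoint_iff_inter_eq_empty, subset_univ, true_and]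
  rw [hneg, hsub] at hsplit
  linarith [hsplit, hall]

end Aux

/-- For a completely alternating `θ` with `θ(∅)=0`, `θ({t})=1`, TM coefficients
`τ^M_L` and stable tail dependence function `ℓ*(x) = ∑_{∅≠L} τ^M_L ⋁_{t∈L} x_t`:
every `y ∈ [0,∞)^M` with `⟨y,𝟙_A⟩ ≤ θ(A)` for all nonempty `A` satisfies
`⟨x,y⟩ ≤ ℓ*(x)` for all `x ∈ [0,∞)^M`; consequently the dependency set of the
TM vector equals `{y ∈ [0,∞)^M : ∑_{t∈A} y_t ≤ θ(A) for all ∅ ≠ A ⊆ M}`. -/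
theorem TM_dependency_set {M : Type*} [Fintype M] [DecidableEq M] [Nonempty M]
    (θ : Finset M → ℝ) (hCA : CompAlt θ) (h0 : θ ∅ = 0)
    (h1 : ∀ t : M, θ {t} = 1)
    (τ : Finset M → ℝ)
    (hτ : ∀ L : Finset M, τ L =
      ∑ I ∈ L.powerset, (-1 : ℝ) ^ (I.card + 1) * θ ((Finset.univ \ L) ∪ I))
    (ℓstar : (M → ℝ) → ℝ)
    (hℓ : ∀ x : M → ℝ, ℓstar x =
      ∑ L ∈ (Finset.univ : Finset M).powerset.filter Finset.Nonempty,
        τ L * ⨆ t ∈ L, x t) :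
    (∀ x y : M → ℝ, (∀ t, 0 ≤ x t) → (∀ t, 0 ≤ y t) →
      (∀ A : Finset M, A.Nonempty → ∑ t ∈ A, y t ≤ θ A) →
      ∑ t, x t * y t ≤ ℓstar x) ∧
    ({y : M → ℝ | (∀ t, 0 ≤ y t) ∧
        ∀ x : M → ℝ, (∀ t, 0 ≤ x t) → ∑ t, x t * y t ≤ ℓstar x}
      = {y : M → ℝ | (∀ t, 0 ≤ y t) ∧
        ∀ A : Finset M, A.Nonempty → ∑ t ∈ A, y t ≤ θ A}) := by
  classical
  set NE := (Finset.univ : Finset M).powerset.filter Finset.Nonempty with hNE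
  have key : ∀ A : Finset M, ∑ L ∈ NE.filter (fun L => (L ∩ A).Nonempty), τ L = θ A := by
    intro A
    rw [← sum_tau_inter θ τ hτ h0 A]
    congr 1
    rw [hNE, Finset.filter_filter]
    refine Finset.filter_congr fun L _ => ?_
    constructor
    · rintro ⟨_, h⟩; exact h
    · intro h; exact ⟨h.mono inter_subset_left, h⟩
  have hℓ' : ∀ x : M → ℝ, (∀ t, 0 ≤ x t) → ℓstar x = ∑ L ∈ NE, τ L * msup L x := by
    intro x hx
    rw [hℓ]
    exact Finset.sum_congr rfl fun L _ => by rw [biSup_eq_msup L x hx]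
  have part1 : ∀ x y : M → ℝ, (∀ t, 0 ≤ x t) → (∀ t, 0 ≤ y t) →
      (∀ A : Finset M, A.Nonempty → ∑ t ∈ A, y t ≤ θ A) →
      ∑ t, x t * y t ≤ ℓstar x := by
    intro x y hx hy hyθ
    rw [hℓ' x hx]
    have core : ∀ S : Finset M, ∀ x : M → ℝ, (∀ t, 0 ≤ x t) → (∀ t ∉ S, x t = 0) →
        ∑ t, x t * y t ≤ ∑ L ∈ NE, τ L * msup L x := by
      intro S
      induction S using Finset.strongInduction with
      | _ S ih =>
        intro x hx hxS
        rcases S.eq_empty_or_nonempty with rfl | hS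
        · have hx0 : ∀ t, x t = 0 := fun t => hxS t (notMem_empty t)
          have hterm : ∀ L ∈ NE, τ L * msup L x = 0 := by
            intro L _
            have h' : msup L x = msup L (fun _ => (0:ℝ)) := msup_congr fun t _ => hx0 t
            rw [h', msup_const_zero, mul_zero]
          have hA : ∑ t, x t * y t = 0 := by simp [hx0]
          rw [hA, Finset.sum_eq_zero hterm]
        · obtain ⟨t0, ht0, hct0⟩ := Finset.exists_mem_eq_inf' hS x
          set c := S.inf' hS x with hcdef
          have hc : 0 ≤ c := by rw [hct0]; exact hx t0
          set x' : M → ℝ := fun t => x t - if t ∈ S then c else 0 with hx'def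
          have hxdef : ∀ t, x t = x' t + if t ∈ S then c else 0 := fun t => by
            simp [hx'def]
          have hx'0 : ∀ t, 0 ≤ x' t := by
            intro t
            by_cases h : t ∈ S
            · have hle := Finset.inf'_le x h
              simp only [hx'def, if_pos h]
              rw [← hcdef] at hle
              linarith
            · simp only [hx'def, if_neg h, sub_zero]
              exact hx t
          have hx'offS : ∀ t, t ∉ S → x' t = 0 := by
            intro t ht
            simp only [hx'def, if_neg ht, sub_zero]
            exact hxS t ht
          have hx'S : ∀ t ∉ S.erase t0, x' t = 0 := by
            intro t ht
            by_cases h : t ∈ S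
            · have heq : t = t0 := by
                by_contra hne
                exact ht (mem_erase.mpr ⟨hne, h⟩)
              subst heq
              simp only [hx'def, if_pos h]
              rw [← hct0]
              ring
            · exact hx'offS t h
          have IH := ih (S.erase t0) (Finset.erase_ssubset ht0) x' hx'0 hx'S
          have hLHS : ∑ t, x t * y t = ∑ t, x' t * y t + c * ∑ t ∈ S, y t := by
            have hsp : ∀ t, x t * y t = x' t * y t + (if t ∈ S then c * y t else 0) := by
              intro t
              rw [hxdef t]
              split <;> ring
            rw [Finset.sum_congr rfl fun t _ => hsp t, Finset.sum_add_distrib,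
              Finset.sum_ite_mem, univ_inter, Finset.mul_sum]
          have hRHS : ∑ L ∈ NE, τ L * msup L x
              = ∑ L ∈ NE, τ L * msup L x' + c * θ S := by
            have hterm : ∀ L ∈ NE, τ L * msup L x
                = τ L * msup L x' + (if (L ∩ S).Nonempty then c * τ L else 0) := by
              intro L _
              by_cases h : (L ∩ S).Nonempty
              · rw [if_pos h, msup_shift h hx'0 hx'offS hxdef hc]
                ring
              · rw [if_neg h, add_zero]
                congr 1
                refine msup_congr fun t ht => ?_
                have hts : t ∉ S := fun hmem => h ⟨t, mem_inter.mpr ⟨ht, hmem⟩⟩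
                rw [hxdef t, if_neg hts, add_zero]
            rw [Finset.sum_congr rfl hterm, Finset.sum_add_distrib]
            congr 1
            rw [← Finset.sum_filter, ← Finset.mul_sum, key S]
          rw [hLHS, hRHS]
          have hyS := hyθ S hS
          have := mul_le_mul_of_nonneg_left hyS hc
          linarith
    exact core univ x hx fun t ht => absurd (mem_univ t) ht
  refine ⟨part1, ?_⟩
  ext y
  simp only [Set.mem_setOf_eq]
  constructor
  · rintro ⟨hy0, hb⟩
    refine ⟨hy0, fun A hA => ?_⟩
    have hxind : ∀ t, 0 ≤ (fun t => if t ∈ A then (1:ℝ) else 0) t := by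
      intro t; dsimp only; split <;> norm_num
    have hone := hb (fun t => if t ∈ A then (1:ℝ) else 0) hxind
    have h2 : ∑ t, (fun t => if t ∈ A then (1:ℝ) else 0) t * y t = ∑ t ∈ A, y t := by
      simp only [ite_mul, one_mul, zero_mul]
      rw [Finset.sum_ite_mem, univ_inter]
    have h3 : ℓstar (fun t => if t ∈ A then (1:ℝ) else 0) = θ A := by
      rw [hℓ' _ hxind]
      calc ∑ L ∈ NE, τ L * msup L (fun t => if t ∈ A then (1:ℝ) else 0)
          = ∑ L ∈ NE, (if (L ∩ A).Nonempty then τ L else 0) := by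
            refine Finset.sum_congr rfl fun L _ => ?_
            rw [msup_indicator]
            split <;> ring
        _ = θ A := by rw [← Finset.sum_filter, key A]
    calc ∑ t ∈ A, y t = ∑ t, (fun t => if t ∈ A then (1:ℝ) else 0) t * y t := h2.symm
      _ ≤ ℓstar (fun t => if t ∈ A then (1:ℝ) else 0) := hone
      _ = θ A := h3
  · rintro ⟨hy0, hb⟩
    exact ⟨hy0, fun x hx => part1 x y hx hy0 hb⟩
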